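/- Let $c > 0$ be a real number and let $r = \frac{1 + \sqrt{7}}{4} + i\,\frac{-1 + \sqrt{7}}{4}$. For complex numbers $z_1, z_2, z_3, z_4$, define $D(z_1, z_2, z_3, z_4) = r(|z_3|^2 + |z_4|^2) - i\overline{r}(|z_1|^2 + |z_2|^2) + (z_1\overline{z_3} + z_2\overline{z_4}) - i(\overline{z_1} z_3 + \overline{z_2} z_4)$. If $z_1, z_2, z_3, z_4$ are each of the form $c \cdot w$ with $w$ a Gaussian integer, and not all of them are zero, then $|D(z_1, z_2, z_3, z_4)|^2 \geq c^4/2$. In particular, any constellation whose points lie on a square grid of spacing $c$ (such as the proposed APSK constellations with points on square grids and ring radii $c\sqrt{m^2+n^2}$ for integers $m, n$) yields a non-vanishing coding gain of at least $c^4/2$ for the code with design coefficient $r$. -/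

import Mathlib

open Complex ComplexConjugate

/-- A Gaussian integer: a complex number whose real and imaginary parts are integers. -/
def IsGaussianInt (z : ℂ) : Prop := ∃ a b : ℤ, z = (a : ℂ) + (b : ℂ) * Complex.I

/-- The optimized design coefficient `r = (1+√7)/4 + i(-1+√7)/4`. -/
noncomputable def rOpt : ℂ :=
  (((1 + Real.sqrt 7) / 4 : ℝ) : ℂ) + (((-1 + Real.sqrt 7) / 4 : ℝ) : ℂ) * Complex.I

set_option maxHeartbeats 2000000 in
lemma stmt14_mod16 : ∀ s u v t : ZMod 16,
    s^2+2*u^2+2*v^2 = 7*t^2 → 8*s = 0 ∧ 8*u = 0 ∧ 8*v = 0 ∧ 8*t = 0 := by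
  decide

lemma stmt14_even_of_mod16 (s : ℤ) (h : (8 * (s : ZMod 16)) = 0) : 2 ∣ s := by
  have : ((8 * s : ℤ) : ZMod 16) = 0 := by push_cast; exact h
  have := (ZMod.intCast_zmod_eq_zero_iff_dvd (8*s) 16).mp this
  omega

lemma stmt14_descent : ∀ n : ℕ, ∀ s u v t : ℤ,
    t.natAbs ≤ n → s^2+2*u^2+2*v^2 = 7*t^2 → t = 0 := by
  intro n
  induction n with
  | zero => intro s u v t ht _; omega
  | succ n ih =>
    intro s u v t ht h
    have h16 : ((s : ZMod 16))^2 + 2*(u : ZMod 16)^2 + 2*(v : ZMod 16)^2 = 7*(t : ZMod 16)^2 := by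
      have := congrArg (Int.cast : ℤ → ZMod 16) h
      push_cast at this
      simpa only [Int.cast_pow, Int.cast_add, Int.cast_mul, Int.cast_ofNat] using this
    obtain ⟨hs, hu, hv, ht2⟩ := stmt14_mod16 _ _ _ _ h16
    obtain ⟨s', rfl⟩ := stmt14_even_of_mod16 s hs
    obtain ⟨u', rfl⟩ := stmt14_even_of_mod16 u hu
    obtain ⟨v', rfl⟩ := stmt14_even_of_mod16 v hv
    obtain ⟨t', rfl⟩ := stmt14_even_of_mod16 t ht2
    have h' : s'^2 + 2*u'^2 + 2*v'^2 = 7*t'^2 := by linarith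
    rcases eq_or_ne t' 0 with h0 | h0
    · simp [h0]
    · have : t'.natAbs ≤ n := by
        have := Int.natAbs_mul 2 t'
        omega
      have := ih s' u' v' t' this h'
      simp [this]

lemma stmt14_aniso (s u v t : ℤ) (h : s^2+2*u^2+2*v^2 = 7*t^2) : t = 0 :=
  stmt14_descent t.natAbs s u v t le_rfl h

lemma stmt14_sq4zero (a b c d : ℤ) (h : a^2 + b^2 + c^2 + d^2 = 0) :
    a = 0 ∧ b = 0 ∧ c = 0 ∧ d = 0 := by
  have ha := sq_nonneg a; have hb := sq_nonneg b
  have hc := sq_nonneg c; have hd := sq_nonneg d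
  have h1 : a^2 = 0 := by linarith
  have h2 : b^2 = 0 := by linarith
  have h3 : c^2 = 0 := by linarith
  have h4 : d^2 = 0 := by linarith
  exact ⟨sq_eq_zero_iff.mp h1, sq_eq_zero_iff.mp h2, sq_eq_zero_iff.mp h3, sq_eq_zero_iff.mp h4⟩

lemma stmt14_Gpos (a₁ b₁ a₂ b₂ a₃ b₃ a₄ b₄ : ℤ)
    (hnz : ¬ (a₁ = 0 ∧ b₁ = 0 ∧ a₂ = 0 ∧ b₂ = 0 ∧ a₃ = 0 ∧ b₃ = 0 ∧ a₄ = 0 ∧ b₄ = 0)) :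
    1 ≤ 2*(a₃^2+b₃^2+a₄^2+b₄^2)^2 + 2*(a₁^2+b₁^2+a₂^2+b₂^2)^2
      - 3*(a₃^2+b₃^2+a₄^2+b₄^2)*(a₁^2+b₁^2+a₂^2+b₂^2)
      + 2*((a₁*a₃+b₁*b₃+a₂*a₄+b₂*b₄) - (b₁*a₃-a₁*b₃+b₂*a₄-a₂*b₄))
          *((a₃^2+b₃^2+a₄^2+b₄^2)+(a₁^2+b₁^2+a₂^2+b₂^2))
      + 4*((a₁*a₃+b₁*b₃+a₂*a₄+b₂*b₄) - (b₁*a₃-a₁*b₃+b₂*a₄-a₂*b₄))^2 := by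
  set A : ℤ := a₃^2+b₃^2+a₄^2+b₄^2 with hA
  set B : ℤ := a₁^2+b₁^2+a₂^2+b₂^2 with hB
  set p : ℤ := a₁*a₃+b₁*b₃+a₂*a₄+b₂*b₄ with hp
  set q : ℤ := b₁*a₃-a₁*b₃+b₂*a₄-a₂*b₄ with hq
  set u : ℤ := a₁*a₄-b₁*b₄-a₂*a₃+b₂*b₃ with hu
  set v : ℤ := a₁*b₄+b₁*a₄-a₂*b₃-b₂*a₃ with hv
  by_contra hG
  push_neg at hG
  set G : ℤ := 2*A^2 + 2*B^2 - 3*A*B + 2*(p-q)*(A+B) + 4*(p-q)^2 with hGdef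
  have hGle : G ≤ 0 := by omega
  have h4 : 4*G = 7*(A-B)^2 + (A+B+4*(p-q))^2 := by rw [hGdef]; ring
  have s1 := sq_nonneg (A-B)
  have s2 := sq_nonneg (A+B+4*(p-q))
  have e1 : (A-B)^2 = 0 := by linarith
  have e2 : (A+B+4*(p-q))^2 = 0 := by linarith
  have e1' : A - B = 0 := sq_eq_zero_iff.mp e1
  have e2' : A + B + 4*(p-q) = 0 := sq_eq_zero_iff.mp e2
  have hLag : A * B = p^2 + q^2 + u^2 + v^2 := by
    rw [hA, hB, hp, hq, hu, hv]; ring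
  set t : ℤ := q - p with htd
  have hA2 : A = 2*t := by omega
  have hB2 : B = 2*t := by omega
  rw [hA2, hB2] at hLag
  have ht0 : t = 0 := by
    apply stmt14_aniso (t + 2*p) u v t
    linear_combination (-2 : ℤ)*hLag + (2*(t+p+q))*htd
  have hA0 : A = 0 := by omega
  have hB0 : B = 0 := by omega
  obtain ⟨h3', h4', h5', h6'⟩ := stmt14_sq4zero _ _ _ _ hA0
  obtain ⟨h7', h8', h9', h10'⟩ := stmt14_sq4zero _ _ _ _ hB0
  exact hnz ⟨h7', h8', h9', h10', h3', h4', h5', h6'⟩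

theorem stmt_14 (c : ℝ) (hc : 0 < c) (z₁ z₂ z₃ z₄ : ℂ)
    (h₁ : ∃ w : ℂ, IsGaussianInt w ∧ z₁ = (c : ℂ) * w)
    (h₂ : ∃ w : ℂ, IsGaussianInt w ∧ z₂ = (c : ℂ) * w)
    (h₃ : ∃ w : ℂ, IsGaussianInt w ∧ z₃ = (c : ℂ) * w)
    (h₄ : ∃ w : ℂ, IsGaussianInt w ∧ z₄ = (c : ℂ) * w)
    (hnz : ¬ (z₁ = 0 ∧ z₂ = 0 ∧ z₃ = 0 ∧ z₄ = 0)) :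
    ‖
        (rOpt * ((Complex.normSq z₃ : ℂ) + (Complex.normSq z₄ : ℂ)) -
          Complex.I * conj rOpt * ((Complex.normSq z₁ : ℂ) + (Complex.normSq z₂ : ℂ)) +
          (z₁ * conj z₃ + z₂ * conj z₄) -
          Complex.I * (conj z₁ * z₃ + conj z₂ * z₄))‖ ^ 2 ≥ c ^ 4 / 2 := by
  obtain ⟨w₁, ⟨a₁, b₁, rfl⟩, rfl⟩ := h₁
  obtain ⟨w₂, ⟨a₂, b₂, rfl⟩, rfl⟩ := h₂
  obtain ⟨w₃, ⟨a₃, b₃, rfl⟩, rfl⟩ := h₃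
  obtain ⟨w₄, ⟨a₄, b₄, rfl⟩, rfl⟩ := h₄
  have hnz' : ¬ (a₁ = 0 ∧ b₁ = 0 ∧ a₂ = 0 ∧ b₂ = 0 ∧ a₃ = 0 ∧ b₃ = 0 ∧ a₄ = 0 ∧ b₄ = 0) := by
    rintro ⟨e1, e2, e3, e4, e5, e6, e7, e8⟩
    exact hnz (by simp [e1, e2, e3, e4, e5, e6, e7, e8])
  have hG := stmt14_Gpos a₁ b₁ a₂ b₂ a₃ b₃ a₄ b₄ hnz'
  set G : ℤ := 2*(a₃^2+b₃^2+a₄^2+b₄^2)^2 + 2*(a₁^2+b₁^2+a₂^2+b₂^2)^2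
      - 3*(a₃^2+b₃^2+a₄^2+b₄^2)*(a₁^2+b₁^2+a₂^2+b₂^2)
      + 2*((a₁*a₃+b₁*b₃+a₂*a₄+b₂*b₄) - (b₁*a₃-a₁*b₃+b₂*a₄-a₂*b₄))
          *((a₃^2+b₃^2+a₄^2+b₄^2)+(a₁^2+b₁^2+a₂^2+b₂^2))
      + 4*((a₁*a₃+b₁*b₃+a₂*a₄+b₂*b₄) - (b₁*a₃-a₁*b₃+b₂*a₄-a₂*b₄))^2 with hGdef
  have key : ‖
        (rOpt * ((Complex.normSq ((c:ℂ)*((a₃:ℂ)+(b₃:ℂ)*Complex.I)) : ℂ) +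
            (Complex.normSq ((c:ℂ)*((a₄:ℂ)+(b₄:ℂ)*Complex.I)) : ℂ)) -
          Complex.I * conj rOpt * ((Complex.normSq ((c:ℂ)*((a₁:ℂ)+(b₁:ℂ)*Complex.I)) : ℂ) +
            (Complex.normSq ((c:ℂ)*((a₂:ℂ)+(b₂:ℂ)*Complex.I)) : ℂ)) +
          ((c:ℂ)*((a₁:ℂ)+(b₁:ℂ)*Complex.I) * conj ((c:ℂ)*((a₃:ℂ)+(b₃:ℂ)*Complex.I)) +
            (c:ℂ)*((a₂:ℂ)+(b₂:ℂ)*Complex.I) * conj ((c:ℂ)*((a₄:ℂ)+(b₄:ℂ)*Complex.I))) -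
          Complex.I * (conj ((c:ℂ)*((a₁:ℂ)+(b₁:ℂ)*Complex.I)) * ((c:ℂ)*((a₃:ℂ)+(b₃:ℂ)*Complex.I)) +
            conj ((c:ℂ)*((a₂:ℂ)+(b₂:ℂ)*Complex.I)) * ((c:ℂ)*((a₄:ℂ)+(b₄:ℂ)*Complex.I))))‖ ^ 2
      = c^4 * ((G : ℝ)/2) := by
    have hs : Real.sqrt 7 * Real.sqrt 7 = 7 := Real.mul_self_sqrt (by norm_num)
    rw [Complex.sq_norm]
    simp only [rOpt, Complex.normSq_apply, Complex.add_re, Complex.add_im, Complex.sub_re,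
      Complex.sub_im, Complex.mul_re, Complex.mul_im, Complex.I_re, Complex.I_im,
      Complex.ofReal_re, Complex.ofReal_im, Complex.intCast_re, Complex.intCast_im,
      Complex.conj_re, Complex.conj_im, hGdef]
    push_cast
    set s := Real.sqrt 7
    linear_combination (c^4 * ((((a₃:ℝ)^2+(b₃:ℝ)^2+(a₄:ℝ)^2+(b₄:ℝ)^2)^2
      + ((a₁:ℝ)^2+(b₁:ℝ)^2+(a₂:ℝ)^2+(b₂:ℝ)^2)^2)/8
      - ((a₃:ℝ)^2+(b₃:ℝ)^2+(a₄:ℝ)^2+(b₄:ℝ)^2)*((a₁:ℝ)^2+(b₁:ℝ)^2+(a₂:ℝ)^2+(b₂:ℝ)^2)/4)) * hs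
  rw [key]
  have hG' : (1:ℝ) ≤ (G:ℝ) := by exact_mod_cast hG
  have hc4 : (0:ℝ) < c^4 := by positivity
  nlinarith
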